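/- arXiv:1611.01947 — 3 statements merged into one kernel-verified Lean document; each statement's English description precedes it below -/
import Mathlib

section
/- Let S be a nonempty spectrahedron defined by the pencil A(x), let r(A) = min{rank A(x) : x ∈ S} be the minimal rank on S, and let D = {x ∈ ℝ^n : rank A(x) ≤ r(A)}. If C is a connected component of D such that C ∩ S is nonempty, then C ⊆ S. -/
open Matrix

lemma myIsHermitian {m : ℕ} {M : Matrix (Fin m) (Fin m) ℝ} (h : M.IsSymm) : M.IsHermitian := by
  rwa [Matrix.IsHermitian, Matrix.conjTranspose_eq_transpose_of_trivial]

lemma quad_bound {m : ℕ} (B : Matrix (Fin m) (Fin m) ℝ) (v : Fin m → ℝ) (hv : ∀ i, |v i| ≤ 1) :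
    |v ⬝ᵥ (B *ᵥ v)| ≤ ∑ i, ∑ j, |B i j| := by
  simp only [dotProduct, mulVec]
  refine (Finset.abs_sum_le_sum_abs _ _).trans ?_
  refine Finset.sum_le_sum fun i _ => ?_
  rw [abs_mul]
  calc |v i| * |∑ j, B i j * v j| ≤ 1 * (∑ j, |B i j|) := by
        refine mul_le_mul (hv i) ?_ (abs_nonneg _) zero_le_one
        refine (Finset.abs_sum_le_sum_abs _ _).trans ?_
        refine Finset.sum_le_sum fun j _ => ?_
        rw [abs_mul]
        calc |B i j| * |v j| ≤ |B i j| * 1 := mul_le_mul_of_nonneg_left (hv j) (abs_nonneg _)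
          _ = |B i j| := mul_one _
    _ = ∑ j, |B i j| := one_mul _

lemma aux_psd {m : ℕ} {M : Matrix (Fin m) (Fin m) ℝ} (hM : M.IsSymm)
    (W : Submodule ℝ (Fin m → ℝ)) (hrank : M.rank ≤ Module.finrank ℝ W)
    (hpos : ∀ u ∈ W, u ≠ 0 → 0 < u ⬝ᵥ (M *ᵥ u)) : M.PosSemidef := by
  refine .of_dotProduct_mulVec_nonneg (myIsHermitian hM) fun v => ?_
  have hdisj : Disjoint W (LinearMap.ker M.mulVecLin) := by
    rw [Submodule.disjoint_def]
    intro u huW huK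
    by_contra hne
    have h1 := hpos u huW hne
    have hMu : M *ᵥ u = 0 := huK
    rw [hMu, dotProduct_zero] at h1
    exact lt_irrefl 0 h1
  have hsum : W ⊔ (LinearMap.ker M.mulVecLin) = ⊤ := by
    apply Submodule.eq_top_of_finrank_eq
    have h1 := Submodule.finrank_sup_add_finrank_inf_eq W (LinearMap.ker M.mulVecLin)
    have h2 : Module.finrank ℝ ↥(W ⊓ (LinearMap.ker M.mulVecLin)) = 0 := by
      rw [hdisj.eq_bot, finrank_bot]
    have h3 := LinearMap.finrank_range_add_finrank_ker M.mulVecLin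
    have h4 : Module.finrank ℝ ↥(LinearMap.range M.mulVecLin) = M.rank := rfl
    have h6 := Submodule.finrank_le (W ⊔ (LinearMap.ker M.mulVecLin))
    rw [h4] at h3
    have h5 : Module.finrank ℝ (Fin m → ℝ) = m := Module.finrank_fin_fun ℝ
    rw [h5] at h3 h6 ⊢
    omega
  have hv : v ∈ W ⊔ (LinearMap.ker M.mulVecLin) := hsum ▸ Submodule.mem_top
  obtain ⟨w, hw, k, hk, rfl⟩ := Submodule.mem_sup.mp hv
  have hMk : M *ᵥ k = 0 := hk
  have hkMw : k ⬝ᵥ (M *ᵥ w) = 0 := by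
    rw [dotProduct_mulVec]
    have : k ᵥ* M = 0 := by
      rw [← hM.eq, Matrix.mulVec_transpose] at hMk
      exact hMk
    rw [this, zero_dotProduct]
  have hstar : star (w + k) = w + k := star_trivial _
  rw [hstar, Matrix.mulVec_add, hMk, add_zero, add_dotProduct, hkMw, add_zero]
  rcases eq_or_ne w 0 with h | h
  · simp [h]
  · exact le_of_lt (hpos w hw h)

lemma cont_quadform {m : ℕ} (P : Matrix (Fin m) (Fin m) ℝ) :
    Continuous fun u : Fin m → ℝ => u ⬝ᵥ (P *ᵥ u) := by
  simp only [dotProduct, mulVec]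
  exact continuous_finset_sum _ fun i _ => (continuous_apply i).mul
    (continuous_finset_sum _ fun j _ => continuous_const.mul (continuous_apply j))

lemma exists_eps {m : ℕ} {P : Matrix (Fin m) (Fin m) ℝ} (hP : P.PosSemidef) :
    ∃ ε > 0, ∀ M : Matrix (Fin m) (Fin m) ℝ, M.IsSymm → M.rank ≤ P.rank →
      (∑ i, ∑ j, |M i j - P i j|) < ε → M.PosSemidef := by
  set W := LinearMap.range P.mulVecLin with hWdef
  have hposP : ∀ u ∈ W, u ≠ 0 → 0 < u ⬝ᵥ (P *ᵥ u) := by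
    intro u hu hne
    rcases (hP.dotProduct_mulVec_nonneg u).lt_or_eq with h | h
    · rwa [star_trivial] at h
    · exfalso
      have h0 : star u ⬝ᵥ P *ᵥ u = 0 := by rw [← h]
      have hPu : P *ᵥ u = 0 := (hP.dotProduct_mulVec_zero_iff u).mp h0
      obtain ⟨v, rfl⟩ := hu
      apply hne
      have hPt : Pᵀ = P := by
        have hh := hP.1
        rwa [Matrix.IsHermitian, Matrix.conjTranspose_eq_transpose_of_trivial] at hh
      have hself : (P.mulVecLin v) ⬝ᵥ (P.mulVecLin v) = 0 := by
        simp only [mulVecLin_apply]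
        rw [dotProduct_comm, dotProduct_mulVec, ← Matrix.mulVec_transpose, hPt]
        rw [mulVecLin_apply] at hPu
        rw [hPu, zero_dotProduct]
      exact dotProduct_self_eq_zero.mp hself
  by_cases hr0 : P.rank = 0
  · refine ⟨1, one_pos, fun M hMs hMr _ => aux_psd hMs ⊥ ?_ ?_⟩
    · rw [finrank_bot]; omega
    · intro u hu hne; exact absurd (Submodule.mem_bot (R := ℝ) |>.mp hu) hne
  · have hWne : W ≠ ⊥ := by
      intro h
      apply hr0
      have : P.rank = Module.finrank ℝ ↥W := rfl
      rw [this, h, finrank_bot]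
    obtain ⟨u0, hu0W, hu0ne⟩ := Submodule.exists_mem_ne_zero_of_ne_bot hWne
    set K : Set (Fin m → ℝ) := (W : Set (Fin m → ℝ)) ∩ Metric.sphere 0 1 with hKdef
    have hKne : K.Nonempty := by
      refine ⟨‖u0‖⁻¹ • u0, W.smul_mem _ hu0W, ?_⟩
      simp only [Metric.mem_sphere, dist_zero_right, norm_smul, norm_inv, norm_norm]
      rw [inv_mul_cancel₀ (norm_ne_zero_iff.mpr hu0ne)]
    have hKcomp : IsCompact K := (isCompact_sphere (0 : Fin m → ℝ) 1).inter_left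
      (Submodule.closed_of_finiteDimensional W)
    obtain ⟨v0, hv0K, hv0min⟩ := hKcomp.exists_isMinOn hKne (cont_quadform P).continuousOn
    set c := v0 ⬝ᵥ (P *ᵥ v0) with hcdef
    have hcpos : 0 < c := by
      refine hposP v0 hv0K.1 ?_
      intro h
      have := hv0K.2
      rw [h] at this
      simp at this
    refine ⟨c, hcpos, fun M hMs hMr hdiff => ?_⟩
    refine aux_psd hMs W hMr ?_
    intro u hu hne
    set t := ‖u‖⁻¹ with htdef
    have ht : 0 < t := inv_pos.mpr (norm_pos_iff.mpr hne)
    set v := t • u with hvdef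
    have hvK : v ∈ K := by
      refine ⟨W.smul_mem _ hu, ?_⟩
      simp only [hvdef, Metric.mem_sphere, dist_zero_right, norm_smul, htdef, norm_inv, norm_norm]
      rw [inv_mul_cancel₀ (norm_ne_zero_iff.mpr hne)]
    have hvnorm : ‖v‖ = 1 := by simpa [dist_zero_right] using hvK.2
    have h1 : c ≤ v ⬝ᵥ (P *ᵥ v) := hv0min hvK
    have h2 : |v ⬝ᵥ ((M - P) *ᵥ v)| ≤ ∑ i, ∑ j, |M i j - P i j| := by
      have := quad_bound (M - P) v (fun i => by
        calc |v i| = ‖v i‖ := rfl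
          _ ≤ ‖v‖ := norm_le_pi_norm v i
          _ = 1 := hvnorm)
      simpa using this
    have h3 : 0 < v ⬝ᵥ (M *ᵥ v) := by
      have hMeq : M = P + (M - P) := by abel
      rw [hMeq, Matrix.add_mulVec, dotProduct_add]
      have h4 : -c < v ⬝ᵥ ((M - P) *ᵥ v) := by
        have h5 := neg_abs_le (v ⬝ᵥ ((M - P) *ᵥ v))
        have h6 := h2.trans_lt hdiff
        linarith
      linarith [h1, h4]
    have hvMv : v ⬝ᵥ (M *ᵥ v) = (t * t) * (u ⬝ᵥ (M *ᵥ u)) := by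
      rw [hvdef, Matrix.mulVec_smul, smul_dotProduct, dotProduct_smul]
      simp [smul_eq_mul]; ring
    rw [hvMv] at h3
    by_contra hle
    push_neg at hle
    have : (t * t) * (u ⬝ᵥ (M *ᵥ u)) ≤ 0 :=
      mul_nonpos_of_nonneg_of_nonpos (by positivity) hle
    linarith

theorem connected_component_min_rank_subset_spectrahedron
    (n m : ℕ) (A0 : Matrix (Fin m) (Fin m) ℝ) (A : Fin n → Matrix (Fin m) (Fin m) ℝ)
    (hA0 : A0.IsSymm) (hA : ∀ i, (A i).IsSymm)
    (S : Set (Fin n → ℝ))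
    (hS : S = {x | (A0 + ∑ i, x i • A i).PosSemidef})
    (hSne : S.Nonempty)
    (r : ℕ) (hr : IsLeast {k | ∃ x ∈ S, (A0 + ∑ i, x i • A i).rank = k} r)
    (D : Set (Fin n → ℝ)) (hD : D = {x | (A0 + ∑ i, x i • A i).rank ≤ r})
    (C : Set (Fin n → ℝ)) (hC : ∃ x ∈ D, C = connectedComponentIn D x)
    (hCS : (C ∩ S).Nonempty) :
    C ⊆ S := by
  have hFsymm : ∀ y : Fin n → ℝ, (A0 + ∑ i, y i • A i).IsSymm := by
    intro y
    rw [Matrix.IsSymm, Matrix.transpose_add, Matrix.transpose_sum, hA0]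
    congr 1
    exact Finset.sum_congr rfl fun i _ => by rw [Matrix.transpose_smul, hA i]
  have hcontEntry : ∀ i j, Continuous fun y : Fin n → ℝ => (A0 + ∑ k, y k • A k) i j := by
    intro i j
    simp only [Matrix.add_apply, Matrix.sum_apply, Matrix.smul_apply, smul_eq_mul]
    exact continuous_const.add
      (continuous_finset_sum _ fun k _ => (continuous_apply k).mul continuous_const)
  have hScl : IsClosed S := by
    have hSeq : S = ⋂ u : Fin m → ℝ, {x | 0 ≤ u ⬝ᵥ ((A0 + ∑ i, x i • A i) *ᵥ u)} := by
      rw [hS]; ext x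
      simp only [Set.mem_setOf_eq, Set.mem_iInter]
      constructor
      · intro h u
        have := h.dotProduct_mulVec_nonneg u
        rwa [star_trivial] at this
      · intro h
        exact .of_dotProduct_mulVec_nonneg (myIsHermitian (hFsymm x)) fun u => by rw [star_trivial]; exact h u
    rw [hSeq]
    refine isClosed_iInter fun u => isClosed_le continuous_const ?_
    simp only [dotProduct, mulVec]
    exact continuous_finset_sum _ fun i _ => continuous_const.mul
      (continuous_finset_sum _ fun j _ => (hcontEntry i j).mul continuous_const)
  have key : ∀ x ∈ C ∩ S, ∃ V : Set (Fin n → ℝ), IsOpen V ∧ x ∈ V ∧ ∀ y ∈ D ∩ V, y ∈ S := by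
    rintro x ⟨hxC, hxS⟩
    have hxSpsd : (A0 + ∑ i, x i • A i).PosSemidef := by rw [hS] at hxS; exact hxS
    have hxD : x ∈ D := by
      obtain ⟨x₀, hx₀D, hCeq⟩ := hC
      exact connectedComponentIn_subset D x₀ (hCeq ▸ hxC)
    have hxrank : (A0 + ∑ i, x i • A i).rank = r := by
      have h1 : (A0 + ∑ i, x i • A i).rank ≤ r := by rw [hD] at hxD; exact hxD
      have h2 : r ≤ (A0 + ∑ i, x i • A i).rank := hr.2 ⟨x, hxS, rfl⟩
      omega
    obtain ⟨ε, hεpos, hε⟩ := exists_eps hxSpsd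
    refine ⟨{y | (∑ i, ∑ j, |(A0 + ∑ k, y k • A k) i j - (A0 + ∑ k, x k • A k) i j|) < ε},
      ?_, ?_, ?_⟩
    · exact isOpen_lt (continuous_finset_sum _ fun i _ => continuous_finset_sum _ fun j _ =>
        ((hcontEntry i j).sub continuous_const).abs) continuous_const
    · simp [hεpos]
    · rintro y ⟨hyD, hyV⟩
      rw [hS]
      refine hε _ (hFsymm y) ?_ hyV
      rw [hxrank]
      rw [hD] at hyD
      exact hyD
  obtain ⟨x₀, hx₀D, rfl⟩ := hC
  have hCpre : IsPreconnected (connectedComponentIn D x₀) := isPreconnected_connectedComponentIn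
  haveI : PreconnectedSpace ↥(connectedComponentIn D x₀) := Subtype.preconnectedSpace hCpre
  set T : Set ↥(connectedComponentIn D x₀) := Subtype.val ⁻¹' S with hTdef
  have hTclosed : IsClosed T := hScl.preimage continuous_subtype_val
  have hTopen : IsOpen T := by
    rw [isOpen_iff_mem_nhds]
    rintro ⟨z, hzC⟩ hzT
    obtain ⟨V, hVopen, hzV, hVsub⟩ := key z ⟨hzC, hzT⟩
    refine Filter.mem_of_superset
      ((hVopen.preimage continuous_subtype_val).mem_nhds hzV) ?_
    rintro ⟨w, hwC⟩ hwV
    exact hVsub w ⟨connectedComponentIn_subset D x₀ hwC, hwV⟩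
  have hTne : T.Nonempty := by
    obtain ⟨z, hzC, hzS⟩ := hCS
    exact ⟨⟨z, hzC⟩, hzS⟩
  rcases isClopen_iff.mp ⟨hTclosed, hTopen⟩ with h | h
  · rw [h] at hTne
    exact absurd hTne Set.not_nonempty_empty
  · intro y hy
    have : (⟨y, hy⟩ : ↥(connectedComponentIn D x₀)) ∈ T := h ▸ Set.mem_univ _
    exact this
end

section
/- Let A(x₁) be the 4×4 block-diagonal symmetric matrix with blocks [[1, x₁],[x₁, 2]] and [[2x₁, 2],[2, x₁]]. Then {x₁ ∈ ℝ : A(x₁) ⪰ 0} = {√2}. -/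
open Matrix

theorem irrational_spectrahedron :
    {x : ℝ | (!![1, x, 0, 0; x, 2, 0, 0; 0, 0, 2 * x, 2; 0, 0, 2, x]).PosSemidef}
      = {Real.sqrt 2} := by
  ext x
  simp only [Set.mem_setOf_eq, Set.mem_singleton_iff]
  constructor
  · intro h
    have q := h.dotProduct_mulVec_nonneg
    have h1 : (0:ℝ) ≤ 2 - x ^ 2 := by
      have := q ![x, -1, 0, 0]
      simp [mulVec, dotProduct, Fin.sum_univ_four] at this
      nlinarith [this]
    have h2 : (0:ℝ) ≤ 3 * x - 4 := by
      have := q ![0, 0, 1, -1]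
      simp [mulVec, dotProduct, Fin.sum_univ_four] at this
      nlinarith [this]
    have h3 : (0:ℝ) ≤ 2 * x * (x ^ 2 - 2) := by
      have := q ![0, 0, x, -2]
      simp [mulVec, dotProduct, Fin.sum_univ_four] at this
      nlinarith [this]
    have hx2 : x ^ 2 = 2 := by nlinarith
    have : x = Real.sqrt 2 := by
      rw [show (2:ℝ) = x ^ 2 from hx2.symm, Real.sqrt_sq (by nlinarith)]
    exact this
  · rintro rfl
    set s := Real.sqrt 2 with hs
    have hs2 : s ^ 2 = 2 := Real.sq_sqrt (by norm_num)
    have hs0 : 0 ≤ s := Real.sqrt_nonneg 2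
    rw [posSemidef_iff_dotProduct_mulVec]
    constructor
    · ext i j
      fin_cases i <;> fin_cases j <;>
        simp [Matrix.conjTranspose_apply, Matrix.cons_val_zero, Matrix.cons_val_one,
          Matrix.head_cons, Matrix.vecHead, Matrix.vecTail]
    · intro v
      have hv : star v ⬝ᵥ (!![1, s, 0, 0; s, 2, 0, 0; 0, 0, 2 * s, 2; 0, 0, 2, s]) *ᵥ v
          = (v 0 + s * v 1) ^ 2 + s * (s * v 2 + v 3) ^ 2 := by
        simp [mulVec, dotProduct, Fin.sum_univ_four, Matrix.cons_val_zero, Matrix.cons_val_one,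
          Matrix.head_cons, Matrix.cons_val_two, Matrix.tail_cons, Matrix.cons_val_three, Matrix.vecHead, Matrix.vecTail]
        linear_combination (-(v 1 ^ 2) - s * v 2 ^ 2 - 2 * v 2 * v 3) * hs2
      rw [hv]
      positivity
end

section
/- Let A(x) be the 4×4 symmetric matrix [[1+x₁, x₂, 0, 0],[x₂, 1-x₁, x₂, 0],[0, x₂, 2+x₁, x₂],[0, 0, x₂, 2-x₁]]. Then every x ∈ ℝ² with A(x) ⪰ 0 and det A(x) = 0 satisfies rank A(x) = 3. -/
open Matrix

lemma rank_submatrix_le' (A : Matrix (Fin 4) (Fin 4) ℝ) (r c : Fin 3 → Fin 4) :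
    (A.submatrix r c).rank ≤ A.rank := by
  have h : A.submatrix r c =
      ((1 : Matrix (Fin 4) (Fin 4) ℝ).submatrix r id) * A *
        ((1 : Matrix (Fin 4) (Fin 4) ℝ).submatrix id c) := by
    ext i j
    simp [Matrix.mul_apply, Matrix.one_apply, Fin.sum_univ_four]
  rw [h]
  exact le_trans (Matrix.rank_mul_le_left _ _) (Matrix.rank_mul_le_right _ _)

lemma rank_le_three (A : Matrix (Fin 4) (Fin 4) ℝ) (hdet : A.det = 0) : A.rank ≤ 3 := by
  obtain ⟨v, hv, hAv⟩ := Matrix.exists_mulVec_eq_zero_iff.mpr hdet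
  have hrn := LinearMap.finrank_range_add_finrank_ker A.mulVecLin
  have hker : 0 < Module.finrank ℝ (LinearMap.ker A.mulVecLin) := by
    rw [Module.finrank_pos_iff]
    exact nontrivial_of_ne ⟨v, by simpa [Matrix.mulVecLin] using hAv⟩ 0
      (by simp [Subtype.ext_iff, hv])
  have h4 : Module.finrank ℝ (Fin 4 → ℝ) = 4 := by simp
  rw [h4] at hrn
  have : A.rank = Module.finrank ℝ (LinearMap.range A.mulVecLin) := rfl
  omega

lemma rank_eq_three_of (A : Matrix (Fin 4) (Fin 4) ℝ) (r c : Fin 3 → Fin 4)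
    (hdet : A.det = 0) (hsub : (A.submatrix r c).det ≠ 0) : A.rank = 3 := by
  have h1 : (A.submatrix r c).rank = 3 := by
    rw [Matrix.rank_of_isUnit _ ((Matrix.isUnit_iff_isUnit_det _).mpr (isUnit_iff_ne_zero.mpr hsub))]
    simp
  have h2 := rank_submatrix_le' A r c
  have h3 := rank_le_three A hdet
  omega

theorem quartic_boundary_rank_three (x₁ x₂ : ℝ)
    (hpsd : (!![1 + x₁, x₂, 0, 0; x₂, 1 - x₁, x₂, 0; 0, x₂, 2 + x₁, x₂; 0, 0, x₂, 2 - x₁]).PosSemidef)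
    (hdet : (!![1 + x₁, x₂, 0, 0; x₂, 1 - x₁, x₂, 0; 0, x₂, 2 + x₁, x₂; 0, 0, x₂, 2 - x₁]).det = 0) :
    (!![1 + x₁, x₂, 0, 0; x₂, 1 - x₁, x₂, 0; 0, x₂, 2 + x₁, x₂; 0, 0, x₂, 2 - x₁]).rank = 3 := by
  set A := !![1 + x₁, x₂, 0, 0; x₂, 1 - x₁, x₂, 0; 0, x₂, 2 + x₁, x₂; 0, 0, x₂, 2 - x₁] with hA
  by_cases h2 : x₂ = 0
  · -- diagonal case
    have ha : (0:ℝ) ≤ 1 + x₁ := by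
      have := hpsd.dotProduct_mulVec_nonneg ![1,0,0,0]
      simpa [hA, Matrix.mulVec, dotProduct, Fin.sum_univ_four] using this
    have hb : (0:ℝ) ≤ 1 - x₁ := by
      have := hpsd.dotProduct_mulVec_nonneg ![0,1,0,0]
      simpa [hA, Matrix.mulVec, dotProduct, Fin.sum_univ_four] using this
    have hdet' : (1 + x₁) = 0 ∨ (1 - x₁) = 0 := by
      subst h2
      rw [hA] at hdet
      simp [Matrix.det_succ_row_zero, Fin.sum_univ_succ] at hdet
      rcases hdet with h | h | h | h
      · exact Or.inl h
      · exact Or.inr h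
      · exact absurd h (by linarith)
      · exact absurd h (by linarith)
    rcases hdet' with h | h
    · -- x₁ = -1, use rows/cols {1,2,3}
      apply rank_eq_three_of A ![1,2,3] ![1,2,3] hdet
      have : (A.submatrix ![1,2,3] ![1,2,3]).det = (1 - x₁) * ((2 + x₁) * (2 - x₁)) := by
        rw [hA, Matrix.det_fin_three]; simp [h2]; ring
      have hx : x₁ = -1 := by linarith
      rw [this, hx]; norm_num
    · -- x₁ = 1, use rows/cols {0,2,3}
      apply rank_eq_three_of A ![0,2,3] ![0,2,3] hdet
      have : (A.submatrix ![0,2,3] ![0,2,3]).det = (1 + x₁) * ((2 + x₁) * (2 - x₁)) := by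
        rw [hA, Matrix.det_fin_three]; simp [h2]; ring
      have hx : x₁ = 1 := by linarith
      rw [this, hx]; norm_num
  · apply rank_eq_three_of A ![0,1,2] ![1,2,3] hdet
    have : (A.submatrix ![0,1,2] ![1,2,3]).det = x₂ ^ 3 := by
      rw [hA, Matrix.det_fin_three]; simp; ring
    rw [this]
    exact pow_ne_zero _ h2
end
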